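/- For every n ≥ 2 there exist two orthonormal vectors v₁, v₂ in ℓ₂ⁿ such that for every subset J ⊆ {1,…,n} with |J| ≥ n − 2: (a) for every 1 ≤ j₀ < n/2, dist(v₁, span{e_j : j ∈ J, j ≥ j₀}) ≤ 4/√n; (b) for every n/2 ≤ j₀ ≤ n, dist(v₂, span{e_j : j ∈ J, j < j₀}) ≤ 4/√n. -/

import Mathlib

open scoped RealInnerProductSpace

open Finset

private lemma infDist_le_sqrt {n : ℕ} (v : EuclideanSpace ℝ (Fin n)) (s : Set (EuclideanSpace ℝ (Fin n)))
    (K : Finset (Fin n)) (hK : ∀ j ∈ K, EuclideanSpace.single j (1:ℝ) ∈ s) :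
    Metric.infDist v (Submodule.span ℝ s : Set (EuclideanSpace ℝ (Fin n))) ≤
      Real.sqrt (∑ i ∈ Kᶜ, (v i)^2) := by
  classical
  set w : EuclideanSpace ℝ (Fin n) := ∑ j ∈ K, v j • EuclideanSpace.single j (1:ℝ) with hw
  have hwc : ∀ i, w i = if i ∈ K then v i else 0 := by
    intro i
    rw [hw]
    rw [WithLp.ofLp_sum, Finset.sum_apply]
    simp [EuclideanSpace.single_apply, Finset.sum_ite_eq]
  have hwmem : w ∈ Submodule.span ℝ s :=
    Submodule.sum_mem _ (fun j hj => Submodule.smul_mem _ _ (Submodule.subset_span (hK j hj)))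
  have h1 : Metric.infDist v (Submodule.span ℝ s : Set (EuclideanSpace ℝ (Fin n))) ≤ dist v w :=
    Metric.infDist_le_dist_of_mem hwmem
  refine h1.trans_eq ?_
  rw [dist_eq_norm, EuclideanSpace.norm_eq]
  congr 1
  rw [← Finset.sum_subset (Finset.subset_univ Kᶜ)]
  · refine Finset.sum_congr rfl fun i hi => ?_
    rw [Finset.mem_compl] at hi
    have : (v - w) i = v i := by simp [hwc i, if_neg hi]
    rw [this, Real.norm_eq_abs, sq_abs]
  · intro i _ hi
    rw [Finset.mem_compl, not_not] at hi
    have : (v - w) i = 0 := by simp [hwc i, if_pos hi]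
    rw [this, norm_zero]
    norm_num

private noncomputable def uvec {n : ℕ} (S : Finset (Fin n)) : EuclideanSpace ℝ (Fin n) :=
  WithLp.toLp 2 (fun j => if j ∈ S then (Real.sqrt S.card)⁻¹ else 0)

private lemma uvec_apply {n : ℕ} (S : Finset (Fin n)) (j : Fin n) :
    uvec S j = if j ∈ S then (Real.sqrt S.card)⁻¹ else 0 := rfl

private lemma infDist_indicator_le {n : ℕ} (hn : 0 < n) (S K : Finset (Fin n)) (hS : S.Nonempty)
    (hcard : (S \ K).card * n ≤ 16 * S.card)
    (s : Set (EuclideanSpace ℝ (Fin n))) (hK : ∀ j ∈ K, EuclideanSpace.single j (1:ℝ) ∈ s) :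
    Metric.infDist (uvec S)
      (Submodule.span ℝ s : Set (EuclideanSpace ℝ (Fin n))) ≤ 4 / Real.sqrt n := by
  classical
  have hSpos : (0:ℝ) < S.card := by exact_mod_cast hS.card_pos
  refine (infDist_le_sqrt _ s K hK).trans ?_
  have hsum : ∑ i ∈ Kᶜ, ((uvec S i)^2)
      = ((S \ K).card : ℝ) * ((S.card : ℝ))⁻¹ := by
    have h2 : ∀ i : Fin n, ((uvec S i)^2 : ℝ)
        = if i ∈ S then ((S.card : ℝ))⁻¹ else 0 := by
      intro i
      rw [uvec_apply]
      split_ifs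
      · rw [← Real.sqrt_inv, Real.sq_sqrt (by positivity)]
      · norm_num
    rw [Finset.sum_congr rfl (fun i _ => h2 i), Finset.sum_ite_mem, Finset.sum_const,
      nsmul_eq_mul]
    congr 2
    rw [Finset.sdiff_eq_inter_compl, Finset.inter_comm]
  rw [hsum]
  have h16 : ((S \ K).card : ℝ) * ((S.card : ℝ))⁻¹ ≤ 16 / n := by
    rw [← div_eq_mul_inv, div_le_div_iff₀ hSpos (by exact_mod_cast hn)]
    exact_mod_cast hcard
  refine (Real.sqrt_le_sqrt h16).trans ?_
  rw [show (16:ℝ)/n = (4/Real.sqrt n)^2 by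
    rw [div_pow, Real.sq_sqrt (by positivity)]; norm_num]
  rw [Real.sqrt_sq (by positivity)]

private lemma norm_uvec {n : ℕ} (S : Finset (Fin n)) (hS : S.Nonempty) : ‖uvec S‖ = 1 := by
  classical
  have hSpos : (0:ℝ) < S.card := by exact_mod_cast hS.card_pos
  rw [EuclideanSpace.norm_eq]
  have h2 : ∀ i : Fin n, ‖uvec S i‖^2 = if i ∈ S then ((S.card : ℝ))⁻¹ else 0 := by
    intro i
    rw [Real.norm_eq_abs, sq_abs, uvec_apply]
    split_ifs
    · rw [← Real.sqrt_inv, Real.sq_sqrt (by positivity)]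
    · norm_num
  rw [Finset.sum_congr rfl (fun i _ => h2 i), Finset.sum_ite_mem, Finset.univ_inter,
    Finset.sum_const, nsmul_eq_mul, mul_inv_cancel₀ (ne_of_gt hSpos), Real.sqrt_one]

/-- For every `n ≥ 2` there are orthonormal vectors `v₁, v₂` in `ℓ₂ⁿ` such that for any
`J ⊆ {1,…,n}` with `|J| ≥ n-2`:  `dist(v₁, span{e_j : j ∈ J, j ≥ j₀}) ≤ 4/√n` whenever
`1 ≤ j₀ < n/2`, and `dist(v₂, span{e_j : j ∈ J, j < j₀}) ≤ 4/√n` whenever `n/2 ≤ j₀ ≤ n`.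
(Indices `j` are 1-indexed, i.e. a coordinate `j : Fin n` corresponds to `(j : ℕ) + 1`.) -/
theorem exists_orthonormal_pair_close_to_tails
    (n : ℕ) (hn : 2 ≤ n) :
    ∃ v₁ v₂ : EuclideanSpace ℝ (Fin n),
      ‖v₁‖ = 1 ∧ ‖v₂‖ = 1 ∧ ⟪v₁, v₂⟫ = 0 ∧
      ∀ J : Finset (Fin n), n - 2 ≤ J.card →
        (∀ j₀ : ℕ, 1 ≤ j₀ → (j₀ : ℝ) < (n : ℝ) / 2 →
          Metric.infDist v₁
            ((Submodule.span ℝ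
              {v | ∃ j ∈ J, j₀ ≤ (j : ℕ) + 1 ∧ v = EuclideanSpace.single j (1 : ℝ)} :
                Submodule ℝ (EuclideanSpace ℝ (Fin n))) : Set (EuclideanSpace ℝ (Fin n)))
            ≤ 4 / Real.sqrt n) ∧
        (∀ j₀ : ℕ, (n : ℝ) / 2 ≤ (j₀ : ℝ) → j₀ ≤ n →
          Metric.infDist v₂
            ((Submodule.span ℝ
              {v | ∃ j ∈ J, (j : ℕ) + 1 < j₀ ∧ v = EuclideanSpace.single j (1 : ℝ)} :
                Submodule ℝ (EuclideanSpace ℝ (Fin n))) : Set (EuclideanSpace ℝ (Fin n)))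
            ≤ 4 / Real.sqrt n) := by
  classical
  set m : ℕ := n / 2 with hm
  set S₁ : Finset (Fin n) := Finset.univ.filter (fun j : Fin n => m ≤ (j : ℕ)) with hS₁def
  set S₂ : Finset (Fin n) := Finset.univ.filter (fun j : Fin n => (j : ℕ) < m) with hS₂def
  -- cardinalities
  have hS₂card : S₂.card = m := by
    have himg : S₂.image Fin.val = Finset.range m := by
      ext x
      simp only [hS₂def, Finset.mem_image, Finset.mem_filter, Finset.mem_univ, true_and,
        Finset.mem_range]
      constructor
      · rintro ⟨j, hj, rfl⟩; exact hj
      · intro hx; exact ⟨⟨x, by omega⟩, hx, rfl⟩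
    rw [← Finset.card_image_of_injective S₂ Fin.val_injective, himg, Finset.card_range]
  have hsplit := Finset.card_filter_add_card_filter_not
    (s := (Finset.univ : Finset (Fin n))) (p := fun j : Fin n => (j : ℕ) < m)
  have hS₁card : S₁.card = n - m := by
    have he : Finset.univ.filter (fun j : Fin n => ¬ (j : ℕ) < m) = S₁ := by
      rw [hS₁def]; congr 1; ext j; simp [not_lt]
    rw [he] at hsplit
    rw [← hS₂def] at hsplit
    simp only [Finset.card_univ, Fintype.card_fin] at hsplit
    omega
  have hS₁ne : S₁.Nonempty := Finset.card_pos.mp (by omega)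
  have hS₂ne : S₂.Nonempty := Finset.card_pos.mp (by omega)
  refine ⟨uvec S₁, uvec S₂, norm_uvec S₁ hS₁ne, norm_uvec S₂ hS₂ne, ?_, ?_⟩
  · -- inner product zero
    rw [PiLp.inner_apply]
    refine Finset.sum_eq_zero fun i _ => ?_
    simp only [RCLike.inner_apply, conj_trivial]
    rcases lt_or_ge (i : ℕ) m with h | h
    · have hni : i ∉ S₁ := by
        simp only [hS₁def, Finset.mem_filter, Finset.mem_univ, true_and]; omega
      rw [uvec_apply S₁, if_neg hni, mul_zero]
    · have hni : i ∉ S₂ := by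
        simp only [hS₂def, Finset.mem_filter, Finset.mem_univ, true_and]; omega
      rw [uvec_apply S₂, if_neg hni, zero_mul]
  · intro J hJ
    have hJc : (Finset.univ \ J).card ≤ 2 := by
      rw [Finset.card_sdiff_of_subset (Finset.subset_univ J), Finset.card_univ, Fintype.card_fin]
      omega
    constructor
    · intro j₀ hj₀1 hj₀2
      have hj₀n : 2 * j₀ < n := by
        have : ((2 * j₀ : ℕ) : ℝ) < n := by push_cast; linarith
        exact_mod_cast this
      refine infDist_indicator_le (by omega) S₁ (S₁ ∩ J) hS₁ne ?_ _ ?_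
      · have hsub : S₁ \ (S₁ ∩ J) ⊆ Finset.univ \ J := by
          intro x hx
          simp only [Finset.mem_sdiff, Finset.mem_inter, Finset.mem_univ, true_and] at hx ⊢
          tauto
        have := Finset.card_le_card hsub
        have h2 : (S₁ \ (S₁ ∩ J)).card ≤ 2 := le_trans this hJc
        calc (S₁ \ (S₁ ∩ J)).card * n ≤ 2 * n := Nat.mul_le_mul_right n h2
          _ ≤ 16 * S₁.card := by rw [hS₁card]; omega
      · intro j hj
        rw [Finset.mem_inter, hS₁def, Finset.mem_filter] at hj
        exact ⟨j, hj.2, by omega, rfl⟩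
    · intro j₀ hj₀1 hj₀2
      have hj₀n : n ≤ 2 * j₀ := by
        have : ((n : ℕ) : ℝ) ≤ ((2 * j₀ : ℕ) : ℝ) := by push_cast; linarith
        exact_mod_cast this
      set K : Finset (Fin n) := Finset.univ.filter
        (fun j : Fin n => j ∈ J ∧ (j : ℕ) + 1 < j₀) with hKdef
      refine infDist_indicator_le (by omega) S₂ K hS₂ne ?_ _ ?_
      · have hsub : S₂ \ K ⊆ (Finset.univ \ J) ∪
            (S₂.filter (fun j : Fin n => ¬ ((j : ℕ) + 1 < j₀))) := by
          intro x hx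
          simp only [Finset.mem_sdiff, hKdef, Finset.mem_filter, Finset.mem_univ, true_and,
            Finset.mem_union, not_and] at hx ⊢
          rcases hx with ⟨hx1, hx2⟩
          by_cases hxJ : x ∈ J
          · exact Or.inr ⟨hx1, hx2 hxJ⟩
          · exact Or.inl hxJ
        have hone : (S₂.filter (fun j : Fin n => ¬ ((j : ℕ) + 1 < j₀))).card ≤ 1 := by
          rw [Finset.card_le_one]
          intro a ha b hb
          simp only [Finset.mem_filter, hS₂def, Finset.mem_univ, true_and, not_lt] at ha hb
          have : (a : ℕ) = (b : ℕ) := by omega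
          exact Fin.val_injective this
        have h3 : (S₂ \ K).card ≤ 3 := by
          have := Finset.card_le_card hsub
          have := Finset.card_union_le (Finset.univ \ J)
            (S₂.filter (fun j : Fin n => ¬ ((j : ℕ) + 1 < j₀)))
          omega
        calc (S₂ \ K).card * n ≤ 3 * n := Nat.mul_le_mul_right n h3
          _ ≤ 16 * S₂.card := by rw [hS₂card]; omega
      · intro j hj
        rw [hKdef, Finset.mem_filter] at hj
        exact ⟨j, hj.2.1, hj.2.2, rfl⟩
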